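/- The (3≤,3≤)-SAT instance φ is satisfiable if and only if candidate a is a possible co-winner in the social poll instance constructed from φ in which the social network graph is a disjoint union of paths of length at most 1 (i.e., a matching plus isolated vertices) and each agent has two preferred candidates. Hence the unweighted possible winner problem is NP-hard even on disjoint unions of edges and isolated vertices. -/

import Mathlib

open scoped Classical
open Finset

/-- The set of neighbors of `x` (w.r.t. adjacency `adj`) that vote before `x`
in the voting order `ord` (smaller `ord`-value votes earlier). -/
noncomputable def prior {V : Type*} [Fintype V] (adj : V → V → Prop) (ord : V → ℕ) (x : V) :
    Finset V :=
  Finset.univ.filter fun y => adj x y ∧ ord y < ord x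

/-- Refined social poll model: `f` is the (unique) vote function arising from the
voting order `ord`: an agent `x` votes `c ∈ P x` if strictly more than half of her
previously-voting neighbors voted `c`, and otherwise votes her top choice `p1 x`. -/
def Consistent {V C : Type*} [Fintype V] (adj : V → V → Prop)
    (P : V → Finset C) (p1 : V → C) (ord : V → ℕ) (f : V → C) : Prop :=
  ∀ x : V,
    (∃ c ∈ P x,
        (2 * (((prior adj ord x).filter fun y => f y = c).card) > (prior adj ord x).card)
        ∧ f x = c)
    ∨ ((¬ ∃ c ∈ P x,
          2 * (((prior adj ord x).filter fun y => f y = c).card) > (prior adj ord x).card)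
        ∧ f x = p1 x)

/-- The score of candidate `c`: the number of agents voting for `c`. -/
noncomputable def score {V C : Type*} [Fintype V] (f : V → C) (c : C) : ℕ :=
  (Finset.univ.filter fun x => f x = c).card

/-! The SAT construction. The formula has `n` variables and `m` clauses; clause `j`
has `len j ∈ {2,3}` literals `lit j 0, …, lit j (len j - 1)` (a literal is a variable
with a polarity). Candidates: one per literal, one per clause, a dummy `d` and the
distinguished candidate `a`. Agents: two adjacent var-agents per variable; six
clause-agents per clause (pairs of adjacent agents, one pair per literal of the
clause, the spare pair for 2-literal clauses being two isolated agents with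
preferences `(c_j, d)`); three isolated agents with preferences `(l, d)` per literal
`l`; and five isolated agents with preferences `(a, d)`. The social network graph is
a disjoint union of paths of length at most 1. -/

abbrev C13 (n m : ℕ) := (Fin n × Bool) ⊕ (Fin m ⊕ Fin 2)

/-- The dummy candidate `d`. -/
def cd (n m : ℕ) : C13 n m := .inr (.inr 0)

/-- The distinguished candidate `a`. -/
def ca (n m : ℕ) : C13 n m := .inr (.inr 1)

abbrev V13 (n m : ℕ) :=
  (Fin n × Fin 2) ⊕ ((Fin m × Fin 6) ⊕ (((Fin n × Bool) × Fin 3) ⊕ Fin 5))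

def adj13 (n m : ℕ) (len : Fin m → ℕ) : V13 n m → V13 n m → Prop
  | .inl (i, s), .inl (i', s') => i = i' ∧ s ≠ s'
  | .inr (.inl (j, q)), .inr (.inl (j', q')) =>
      j = j' ∧ (q : ℕ) / 2 = (q' : ℕ) / 2 ∧ q ≠ q' ∧ (q : ℕ) / 2 < len j
  | _, _ => False

noncomputable def P13 (n m : ℕ) (len : Fin m → ℕ) (lit : Fin m → Fin 3 → Fin n × Bool) :
    V13 n m → Finset (C13 n m)
  | .inl (i, _) => {.inl (i, true), .inl (i, false)}
  | .inr (.inl (j, q)) =>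
      if (q : ℕ) / 2 < len j ∧ (q : ℕ) % 2 = 1 then
        {.inl (lit j ⟨(q : ℕ) / 2, by have := q.isLt; omega⟩), .inr (.inl j)}
      else {.inr (.inl j), cd n m}
  | .inr (.inr (.inl (l, _))) => {.inl l, cd n m}
  | .inr (.inr (.inr _)) => {ca n m, cd n m}

noncomputable def p113 (n m : ℕ) (len : Fin m → ℕ) (lit : Fin m → Fin 3 → Fin n × Bool) :
    V13 n m → C13 n m
  | .inl (i, s) => if s = 0 then .inl (i, true) else .inl (i, false)
  | .inr (.inl (j, q)) =>
      if (q : ℕ) / 2 < len j ∧ (q : ℕ) % 2 = 1 then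
        .inl (lit j ⟨(q : ℕ) / 2, by have := q.isLt; omega⟩)
      else .inr (.inl j)
  | .inr (.inr (.inl (l, _))) => .inl l
  | .inr (.inr (.inr _)) => ca n m

/-- Number of occurrences of the literal `(v, b)` in the formula. -/
noncomputable def occ13 (n m : ℕ) (len : Fin m → ℕ) (lit : Fin m → Fin 3 → Fin n × Bool)
    (v : Fin n) (b : Bool) : ℕ :=
  ∑ j : Fin m, ((Finset.univ : Finset (Fin 3)).filter
    fun (p : Fin 3) => (p : ℕ) < len j ∧ lit j p = (v, b)).card

/-- Satisfiability of the formula. -/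
def Satisfiable13 (n m : ℕ) (len : Fin m → ℕ) (lit : Fin m → Fin 3 → Fin n × Bool) : Prop :=
  ∃ σ : Fin n → Bool, ∀ j : Fin m, ∃ p : Fin 3,
    (p : ℕ) < len j ∧ (lit j p).2 = σ (lit j p).1

section helpers
variable {V C : Type*} [Fintype V] {adj : V → V → Prop} {P : V → Finset C} {p1 : V → C}
  {ord : V → ℕ} {f : V → C}

lemma consAt_empty {x : V} (hp : prior adj ord x = ∅) (hf : f x = p1 x) :
    (∃ c ∈ P x,
        (2 * (((prior adj ord x).filter fun y => f y = c).card) > (prior adj ord x).card)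
        ∧ f x = c)
    ∨ ((¬ ∃ c ∈ P x,
          2 * (((prior adj ord x).filter fun y => f y = c).card) > (prior adj ord x).card)
        ∧ f x = p1 x) := by
  right
  refine ⟨?_, hf⟩
  rintro ⟨c, hc, hgt⟩
  simp [hp] at hgt

lemma consAt_copy {x y : V} (hp : prior adj ord x = {y}) (hy : f y ∈ P x) (hf : f x = f y) :
    (∃ c ∈ P x,
        (2 * (((prior adj ord x).filter fun y => f y = c).card) > (prior adj ord x).card)
        ∧ f x = c)
    ∨ ((¬ ∃ c ∈ P x,
          2 * (((prior adj ord x).filter fun y => f y = c).card) > (prior adj ord x).card)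
        ∧ f x = p1 x) := by
  left
  refine ⟨f y, hy, ?_, hf⟩
  rw [hp, Finset.filter_singleton]
  simp

lemma consAt_skip {x y : V} (hp : prior adj ord x = {y}) (hy : f y ∉ P x) (hf : f x = p1 x) :
    (∃ c ∈ P x,
        (2 * (((prior adj ord x).filter fun y => f y = c).card) > (prior adj ord x).card)
        ∧ f x = c)
    ∨ ((¬ ∃ c ∈ P x,
          2 * (((prior adj ord x).filter fun y => f y = c).card) > (prior adj ord x).card)
        ∧ f x = p1 x) := by
  right
  refine ⟨?_, hf⟩
  rintro ⟨c, hc, hgt⟩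
  rw [hp, Finset.filter_singleton] at hgt
  by_cases h : f y = c
  · exact hy (h ▸ hc)
  · simp [h] at hgt

lemma prior_of_no_adj {x : V} (h : ∀ y, ¬ adj x y) : prior adj ord x = ∅ := by
  ext y; simp [prior, h]

lemma vote_cases (hC : Consistent adj P p1 ord f) (x : V) :
    f x = p1 x ∨ ∃ y, adj x y ∧ ord y < ord x ∧ f y = f x ∧ f x ∈ P x := by
  rcases hC x with ⟨c, hc, hgt, hfx⟩ | ⟨-, hfx⟩
  · right
    have hne : ((prior adj ord x).filter fun y => f y = c).Nonempty := by
      rw [← Finset.card_pos]; omega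
    obtain ⟨y, hy⟩ := hne
    have hy' := Finset.mem_filter.1 hy
    have hy'' := Finset.mem_filter.1 hy'.1
    exact ⟨y, hy''.2.1, hy''.2.2, by rw [hy'.2, hfx], hfx ▸ hc⟩
  · left; exact hfx

lemma pair_copy (hC : Consistent adj P p1 ord f) {x y : V}
    (hp : prior adj ord x = {y}) (hy : f y ∈ P x) : f x = f y := by
  rcases hC x with ⟨c, hc, hgt, hfx⟩ | ⟨hno, hfx⟩
  · rw [hp, Finset.filter_singleton] at hgt
    by_cases h : f y = c
    · rw [hfx, h]
    · simp [h] at hgt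
  · exact absurd ⟨f y, hy, by rw [hp, Finset.filter_singleton]; simp⟩ hno

lemma f_mem_P (hC : Consistent adj P p1 ord f) (hp1 : ∀ x, p1 x ∈ P x) (x : V) :
    f x ∈ P x := by
  rcases hC x with ⟨c, hc, -, hfx⟩ | ⟨-, hfx⟩
  · rwa [hfx]
  · rw [hfx]; exact hp1 x

lemma score_ge {c : C} {S : Finset V} (hS : ∀ x ∈ S, f x = c) : S.card ≤ score f c :=
  Finset.card_le_card fun x hx => Finset.mem_filter.2 ⟨Finset.mem_univ x, hS x hx⟩

lemma score_le {c : C} {S : Finset V} (hS : ∀ x, f x = c → x ∈ S) : score f c ≤ S.card :=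
  Finset.card_le_card fun x hx => hS x (Finset.mem_filter.1 hx).2

lemma score_eq_sum (c : C) : score f c = ∑ x : V, if f x = c then 1 else 0 :=
  Finset.card_filter _ _

end helpers
/-- The voting order used in the forward direction. -/
def ordF (n m : ℕ) (σ : Fin n → Bool) (w : Fin m → Fin 3) : V13 n m → ℕ
  | .inl (i, s) => 2 * (i : ℕ) + (if σ i then 1 - (s : ℕ) else (s : ℕ))
  | .inr (.inl (j, q)) =>
      2 * (n + 3 * (j : ℕ) + (q : ℕ) / 2) +
        (if (q : ℕ) / 2 = (w j : ℕ) then 1 - (q : ℕ) % 2 else (q : ℕ) % 2)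
  | .inr (.inr (.inl ((v, b), t))) =>
      2 * (n + 3 * m + 6 * (v : ℕ) + 3 * (cond b 1 0) + (t : ℕ))
  | .inr (.inr (.inr k)) => 2 * (n + 3 * m + 6 * n + (k : ℕ))

/-- The vote function used in the forward direction. -/
def fF (n m : ℕ) (len : Fin m → ℕ) (lit : Fin m → Fin 3 → Fin n × Bool)
    (σ : Fin n → Bool) (w : Fin m → Fin 3) : V13 n m → C13 n m
  | .inl (i, _) => .inl (i, !σ i)
  | .inr (.inl (j, q)) =>
      if (q : ℕ) % 2 = 1 ∧ (q : ℕ) / 2 < len j ∧ (q : ℕ) / 2 = (w j : ℕ) then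
        .inl (lit j ⟨(q : ℕ) / 2, by have := q.isLt; omega⟩)
      else .inr (.inl j)
  | .inr (.inr (.inl (l, _))) => .inl l
  | .inr (.inr (.inr _)) => ca n m

lemma ordF_inj (n m : ℕ) (σ : Fin n → Bool) (w : Fin m → Fin 3) :
    Function.Injective (ordF n m σ w) := by
  intro x y h
  rcases x with ⟨i, s⟩ | ⟨⟨j, q⟩ | ⟨⟨⟨v, b⟩, t⟩ | k⟩⟩ <;>
    rcases y with ⟨i', s'⟩ | ⟨⟨j', q'⟩ | ⟨⟨⟨v', b'⟩, t'⟩ | k'⟩⟩ <;>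
      simp only [ordF] at h
  · -- var var
    have hs := s.isLt; have hs' := s'.isLt
    have hii : i = i' := by
      refine Fin.ext ?_
      split_ifs at h <;> omega
    subst hii
    have hss : (s : ℕ) = s' := by split_ifs at h <;> omega
    simp only [Sum.inl.injEq, Prod.mk.injEq, Fin.ext_iff, and_true, true_and]
    omega
  · -- var clause
    exfalso; have := i.isLt; have := s.isLt; have := q'.isLt
    split_ifs at h <;> omega
  · -- var lit
    exfalso; have := i.isLt; have := s.isLt; have := t'.isLt
    cases b' <;> simp only [cond] at h <;> split_ifs at h <;> omega
  · -- var a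
    exfalso; have := i.isLt; have := s.isLt; have := k'.isLt
    split_ifs at h <;> omega
  · -- clause var
    exfalso; have := i'.isLt; have := s'.isLt; have := q.isLt
    split_ifs at h <;> omega
  · -- clause clause
    have hq := q.isLt; have hq' := q'.isLt
    have hjq : (j : ℕ) = j' ∧ (q : ℕ) / 2 = (q' : ℕ) / 2 := by
      have hj := j.isLt; have hj' := j'.isLt
      split_ifs at h <;> omega
    obtain ⟨hj, hq2⟩ := hjq
    have hjj : j = j' := Fin.ext hj
    subst hjj
    rw [hq2] at h
    have hmod : (q : ℕ) % 2 = (q' : ℕ) % 2 := by split_ifs at h <;> omega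
    have : (q : ℕ) = q' := by omega
    simp only [Sum.inr.injEq, Sum.inl.injEq, Prod.mk.injEq, Fin.ext_iff, and_true, true_and]
    omega
  · -- clause lit
    exfalso; have := q.isLt; have := j.isLt; have := t'.isLt
    cases b' <;> simp only [cond] at h <;> split_ifs at h <;> omega
  · -- clause a
    exfalso; have := q.isLt; have := j.isLt; have := k'.isLt
    split_ifs at h <;> omega
  · -- lit var
    exfalso; have := i'.isLt; have := s'.isLt; have := t.isLt
    cases b <;> simp only [cond] at h <;> split_ifs at h <;> omega
  · -- lit clause
    exfalso; have := q'.isLt; have := j'.isLt; have := t.isLt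
    cases b <;> simp only [cond] at h <;> split_ifs at h <;> omega
  · -- lit lit
    have ht := t.isLt; have ht' := t'.isLt; have hv := v.isLt; have hv' := v'.isLt
    cases b <;> cases b' <;> simp only [cond] at h
    · have : (v : ℕ) = v' ∧ (t : ℕ) = t' := by omega
      simp only [Sum.inr.injEq, Sum.inl.injEq, Prod.mk.injEq, Fin.ext_iff, and_true, true_and]
      omega
    · exfalso; omega
    · exfalso; omega
    · have : (v : ℕ) = v' ∧ (t : ℕ) = t' := by omega
      simp only [Sum.inr.injEq, Sum.inl.injEq, Prod.mk.injEq, Fin.ext_iff, and_true, true_and]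
      omega
  · -- lit a
    exfalso; have := t.isLt; have := v.isLt; have := k'.isLt
    cases b <;> simp only [cond] at h <;> omega
  · -- a var
    exfalso; have := i'.isLt; have := s'.isLt; have := k.isLt
    split_ifs at h <;> omega
  · -- a clause
    exfalso; have := q'.isLt; have := j'.isLt; have := k.isLt
    split_ifs at h <;> omega
  · -- a lit
    exfalso; have := t'.isLt; have := v'.isLt; have := k.isLt
    cases b' <;> simp only [cond] at h <;> omega
  · -- a a
    have : (k : ℕ) = k' := by omega
    simp only [Sum.inr.injEq, Fin.ext_iff]
    omega
section priors
variable {n m : ℕ} {len : Fin m → ℕ}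

lemma prior_var (ord : V13 n m → ℕ) (i : Fin n) (s s' : Fin 2) (hss : s' ≠ s) :
    prior (adj13 n m len) ord (.inl (i, s)) =
      if ord (.inl (i, s')) < ord (.inl (i, s)) then {(.inl (i, s') : V13 n m)} else ∅ := by
  ext y
  simp only [prior, Finset.mem_filter, Finset.mem_univ, true_and]
  constructor
  · rintro ⟨hadj, hlt⟩
    rcases y with ⟨i2, s2⟩ | y2
    · obtain ⟨rfl, hne⟩ : i = i2 ∧ s ≠ s2 := hadj
      have hs2 : s2 = s' := by
        have h2 := s2.isLt; have h1 := s.isLt; have h3 := s'.isLt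
        have e1 : (s2 : ℕ) ≠ s := fun hh => hne (Fin.ext hh.symm)
        have e2 : (s' : ℕ) ≠ s := fun hh => hss (Fin.ext hh)
        exact Fin.ext (by omega)
      subst hs2
      rw [if_pos hlt]
      exact Finset.mem_singleton_self _
    · exact hadj.elim
  · intro hy
    by_cases hlt : ord (.inl (i, s')) < ord (.inl (i, s))
    · rw [if_pos hlt, Finset.mem_singleton] at hy
      subst hy
      exact ⟨⟨rfl, fun hh => hss hh.symm⟩, hlt⟩
    · rw [if_neg hlt] at hy
      exact absurd hy (Finset.notMem_empty _)

lemma prior_clause (ord : V13 n m → ℕ) (j : Fin m) (q q' : Fin 6)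
    (h2 : (q : ℕ) / 2 = (q' : ℕ) / 2) (hne : q ≠ q') (hlt : (q : ℕ) / 2 < len j) :
    prior (adj13 n m len) ord (.inr (.inl (j, q))) =
      if ord (.inr (.inl (j, q'))) < ord (.inr (.inl (j, q))) then
        {(.inr (.inl (j, q')) : V13 n m)} else ∅ := by
  ext y
  simp only [prior, Finset.mem_filter, Finset.mem_univ, true_and]
  constructor
  · rintro ⟨hadj, hlt2⟩
    rcases y with ⟨i2, s2⟩ | ⟨⟨j2, q2⟩ | y2⟩
    · exact hadj.elim
    · obtain ⟨rfl, he, hne2, -⟩ :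
          j = j2 ∧ (q : ℕ) / 2 = (q2 : ℕ) / 2 ∧ q ≠ q2 ∧ (q : ℕ) / 2 < len j := hadj
      have hq2 : q2 = q' := by
        have e1 : (q : ℕ) ≠ q2 := fun hh => hne2 (Fin.ext hh)
        have e2 : (q : ℕ) ≠ q' := fun hh => hne (Fin.ext hh)
        exact Fin.ext (by omega)
      subst hq2
      rw [if_pos hlt2]
      exact Finset.mem_singleton_self _
    · exact hadj.elim
  · intro hy
    by_cases hlt2 : ord (.inr (.inl (j, q'))) < ord (.inr (.inl (j, q)))
    · rw [if_pos hlt2, Finset.mem_singleton] at hy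
      subst hy
      exact ⟨⟨rfl, h2, hne, hlt⟩, hlt2⟩
    · rw [if_neg hlt2] at hy
      exact absurd hy (Finset.notMem_empty _)

lemma prior_clause_far (ord : V13 n m → ℕ) (j : Fin m) (q : Fin 6)
    (hge : ¬ (q : ℕ) / 2 < len j) :
    prior (adj13 n m len) ord (.inr (.inl (j, q))) = ∅ := by
  refine prior_of_no_adj ?_
  rintro (⟨i2, s2⟩ | ⟨⟨j2, q2⟩ | y2⟩) hadj
  · exact hadj.elim
  · obtain ⟨-, -, -, hl⟩ :
        j = j2 ∧ (q : ℕ) / 2 = (q2 : ℕ) / 2 ∧ q ≠ q2 ∧ (q : ℕ) / 2 < len j := hadj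
    exact hge hl
  · exact hadj.elim

lemma prior_lit (ord : V13 n m → ℕ) (l : Fin n × Bool) (t : Fin 3) :
    prior (adj13 n m len) ord (.inr (.inr (.inl (l, t)))) = ∅ :=
  prior_of_no_adj (by rintro (y | ⟨y | y⟩) hadj <;> exact hadj.elim)

lemma prior_a (ord : V13 n m → ℕ) (k : Fin 5) :
    prior (adj13 n m len) ord (.inr (.inr (.inr k))) = ∅ :=
  prior_of_no_adj (by rintro (y | ⟨y | y⟩) hadj <;> exact hadj.elim)

lemma p1_mem_P13 (lit : Fin m → Fin 3 → Fin n × Bool) (x : V13 n m) :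
    p113 n m len lit x ∈ P13 n m len lit x := by
  rcases x with ⟨i, s⟩ | ⟨⟨j, q⟩ | ⟨⟨l, t⟩ | k⟩⟩ <;> simp only [p113, P13]
  · split_ifs <;> simp
  · split_ifs <;> simp
  · simp
  · simp [ca, cd]

end priors
section forward
variable {n m : ℕ} {len : Fin m → ℕ} {lit : Fin m → Fin 3 → Fin n × Bool}

lemma consF (σ : Fin n → Bool) (w : Fin m → Fin 3) (hw1 : ∀ j, (w j : ℕ) < len j) :
    Consistent (adj13 n m len) (P13 n m len lit) (p113 n m len lit)
      (ordF n m σ w) (fF n m len lit σ w) := by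
  intro x
  rcases x with ⟨i, s⟩ | ⟨⟨j, q⟩ | ⟨⟨l, t⟩ | k⟩⟩
  · -- variable agents
    have hs : s = 0 ∨ s = 1 := by fin_cases s <;> simp
    rcases Bool.eq_false_or_eq_true (σ i) with hσ | hσ <;> rcases hs with rfl | rfl
    · -- σ i = true, s = 0 : copies
      have hp : prior (adj13 n m len) (ordF n m σ w) (.inl (i, 0)) =
          {(.inl (i, 1) : V13 n m)} := by
        rw [prior_var (ordF n m σ w) i 0 1 (by decide)]
        rw [if_pos (by simp [ordF, hσ])]
      exact consAt_copy hp (by simp [fF, P13, hσ]) (by simp [fF])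
    · -- σ i = true, s = 1 : votes first
      have hp : prior (adj13 n m len) (ordF n m σ w) (.inl (i, 1)) = ∅ := by
        rw [prior_var (ordF n m σ w) i 1 0 (by decide)]
        rw [if_neg (by simp [ordF, hσ])]
      exact consAt_empty hp (by simp [fF, p113, hσ])
    · -- σ i = false, s = 0 : votes first
      have hp : prior (adj13 n m len) (ordF n m σ w) (.inl (i, 0)) = ∅ := by
        rw [prior_var (ordF n m σ w) i 0 1 (by decide)]
        rw [if_neg (by simp [ordF, hσ])]
      exact consAt_empty hp (by simp [fF, p113, hσ])
    · -- σ i = false, s = 1 : copies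
      have hp : prior (adj13 n m len) (ordF n m σ w) (.inl (i, 1)) =
          {(.inl (i, 0) : V13 n m)} := by
        rw [prior_var (ordF n m σ w) i 1 0 (by decide)]
        rw [if_pos (by simp [ordF, hσ])]
      exact consAt_copy hp (by simp [fF, P13, hσ]) (by simp [fF])
  · -- clause agents
    by_cases hfar : (q : ℕ) / 2 < len j
    · have hq6 := q.isLt
      obtain ⟨q', hq'val⟩ : ∃ q' : Fin 6, (q' : ℕ) = 2 * ((q : ℕ) / 2) + (1 - (q : ℕ) % 2) :=
        ⟨⟨2 * ((q : ℕ) / 2) + (1 - (q : ℕ) % 2), by omega⟩, rfl⟩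
      have hq'2 : (q : ℕ) / 2 = (q' : ℕ) / 2 := by omega
      have hq'ne : q ≠ q' := by
        intro hh; have : (q : ℕ) = (q' : ℕ) := congrArg Fin.val hh; omega
      have hpc := prior_clause (ordF n m σ w) j q q' hq'2 hq'ne hfar
      by_cases hwit : (q : ℕ) / 2 = (w j : ℕ)
      · rcases Nat.mod_two_eq_zero_or_one (q : ℕ) with hpar | hpar
        · -- even witness-pair agent : partner (lit-agent) votes first, skip
          have hp : prior (adj13 n m len) (ordF n m σ w) (.inr (.inl (j, q))) =
              {(.inr (.inl (j, q')) : V13 n m)} := by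
            rw [hpc]
            rw [if_pos (by
              simp only [ordF]
              rw [if_pos (show (q' : ℕ) / 2 = (w j : ℕ) by omega), if_pos hwit]
              omega)]
          have hfq' : fF n m len lit σ w (.inr (.inl (j, q'))) =
              .inl (lit j ⟨(q : ℕ) / 2, by omega⟩) := by
            simp only [fF]
            rw [if_pos (show (q' : ℕ) % 2 = 1 ∧ (q' : ℕ) / 2 < len j ∧
              (q' : ℕ) / 2 = (w j : ℕ) by refine ⟨by omega, by omega, by omega⟩)]
            exact congrArg (fun p => (Sum.inl (lit j p) : C13 n m))
              (by simp only [Fin.mk.injEq]; omega)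
          refine consAt_skip hp ?_ ?_
          · rw [hfq']
            simp only [P13]
            rw [if_neg (by omega)]
            simp [cd]
          · simp only [fF, p113]
            rw [if_neg (by omega), if_neg (by omega)]
        · -- odd witness agent : votes first its literal
          have hp : prior (adj13 n m len) (ordF n m σ w) (.inr (.inl (j, q))) = ∅ := by
            rw [hpc]
            rw [if_neg (by
              simp only [ordF]
              rw [if_pos (show (q' : ℕ) / 2 = (w j : ℕ) by omega), if_pos hwit]
              omega)]
          refine consAt_empty hp ?_
          simp only [fF, p113]
          rw [if_pos (show (q : ℕ) % 2 = 1 ∧ (q : ℕ) / 2 < len j ∧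
            (q : ℕ) / 2 = (w j : ℕ) from ⟨hpar, hfar, hwit⟩),
            if_pos (show (q : ℕ) / 2 < len j ∧ (q : ℕ) % 2 = 1 from ⟨hfar, hpar⟩)]
      · rcases Nat.mod_two_eq_zero_or_one (q : ℕ) with hpar | hpar
        · -- even non-witness agent : votes first c_j
          have hp : prior (adj13 n m len) (ordF n m σ w) (.inr (.inl (j, q))) = ∅ := by
            rw [hpc]
            rw [if_neg (by
              simp only [ordF]
              rw [if_neg (show ¬ (q' : ℕ) / 2 = (w j : ℕ) by omega), if_neg hwit]
              omega)]
          refine consAt_empty hp ?_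
          simp only [fF, p113]
          rw [if_neg (by omega), if_neg (by omega)]
        · -- odd non-witness agent : copies partner's c_j
          have hp : prior (adj13 n m len) (ordF n m σ w) (.inr (.inl (j, q))) =
              {(.inr (.inl (j, q')) : V13 n m)} := by
            rw [hpc]
            rw [if_pos (by
              simp only [ordF]
              rw [if_neg (show ¬ (q' : ℕ) / 2 = (w j : ℕ) by omega), if_neg hwit]
              omega)]
          have hfq' : fF n m len lit σ w (.inr (.inl (j, q'))) = .inr (.inl j) := by
            simp only [fF]
            rw [if_neg (by omega)]
          refine consAt_copy hp ?_ ?_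
          · rw [hfq']
            simp only [P13]
            rw [if_pos (show (q : ℕ) / 2 < len j ∧ (q : ℕ) % 2 = 1 from ⟨hfar, hpar⟩)]
            simp
          · rw [hfq']
            simp only [fF]
            rw [if_neg (by omega)]
    · have hp := prior_clause_far (ordF n m σ w) (len := len) j q hfar
      refine consAt_empty hp ?_
      simp only [fF, p113]
      rw [if_neg (by omega), if_neg (by omega)]
  · exact consAt_empty (prior_lit (ordF n m σ w) l t) (by simp [fF, p113])
  · exact consAt_empty (prior_a (ordF n m σ w) k) (by simp [fF, p113])

end forward
section forwardscore
variable {n m : ℕ} {len : Fin m → ℕ} {lit : Fin m → Fin 3 → Fin n × Bool}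

/-- the agents with preference `(a, d)` -/
noncomputable def aAgents (n m : ℕ) : Finset (V13 n m) :=
  (Finset.univ : Finset (Fin 5)).image fun k => .inr (.inr (.inr k))

lemma aAgents_card : (aAgents n m).card = 5 := by
  rw [aAgents, Finset.card_image_of_injective _ (fun a b h => by simpa using h)]
  simp

lemma scoreF_ca (σ : Fin n → Bool) (w : Fin m → Fin 3) :
    score (fF n m len lit σ w) (ca n m) = 5 := by
  have h1 : score (fF n m len lit σ w) (ca n m) ≤ (aAgents n m).card := by
    refine score_le ?_
    rintro (⟨i, s⟩ | ⟨⟨j, q⟩ | ⟨⟨l, t⟩ | k⟩⟩) hx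
    · simp [fF, ca] at hx
    · simp only [fF] at hx; split_ifs at hx <;> simp [ca] at hx
    · simp [fF, ca] at hx
    · exact Finset.mem_image.2 ⟨k, Finset.mem_univ _, rfl⟩
  have h2 : (aAgents n m).card ≤ score (fF n m len lit σ w) (ca n m) := by
    refine score_ge ?_
    intro x hx
    rw [aAgents] at hx
    obtain ⟨k, -, rfl⟩ := Finset.mem_image.1 hx
    simp [fF]
  rw [aAgents_card] at h1 h2
  omega

/-- the odd (literal-preferring) witness agent of clause `j` -/
def wAgent (n : ℕ) {m : ℕ} (w : Fin m → Fin 3) (j : Fin m) : V13 n m :=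
  .inr (.inl (j, ⟨2 * (w j : ℕ) + 1, by have := (w j).isLt; omega⟩))

lemma scoreF_clause (σ : Fin n → Bool) (w : Fin m → Fin 3) (hw1 : ∀ j, (w j : ℕ) < len j)
    (j0 : Fin m) : score (fF n m len lit σ w) (.inr (.inl j0)) ≤ 5 := by
  classical
  set S : Finset (V13 n m) :=
    ((Finset.univ : Finset (Fin 6)).image fun q => .inr (.inl (j0, q))) \ {wAgent n w j0}
    with hS
  have hwmem : {wAgent n w j0} ⊆
      (Finset.univ : Finset (Fin 6)).image fun q => (.inr (.inl (j0, q)) : V13 n m) := by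
    intro z hz
    rw [Finset.mem_singleton] at hz
    subst hz
    exact Finset.mem_image.2 ⟨_, Finset.mem_univ _, rfl⟩
  have hcard : S.card = 5 := by
    rw [hS, Finset.card_sdiff_of_subset hwmem,
      Finset.card_image_of_injective _ (fun a b h => by simpa using h)]
    simp
  calc score (fF n m len lit σ w) (.inr (.inl j0)) ≤ S.card := by
        refine score_le ?_
        rintro (⟨i, s⟩ | ⟨⟨j, q⟩ | ⟨⟨l, t⟩ | k⟩⟩) hx
        · simp [fF] at hx
        · simp only [fF] at hx
          by_cases hcond : (q : ℕ) % 2 = 1 ∧ (q : ℕ) / 2 < len j ∧ (q : ℕ) / 2 = (w j : ℕ)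
          · rw [if_pos hcond] at hx; simp at hx
          · rw [if_neg hcond] at hx
            obtain rfl : j = j0 := by simpa using hx
            rw [hS, Finset.mem_sdiff]
            refine ⟨Finset.mem_image.2 ⟨q, Finset.mem_univ _, rfl⟩, ?_⟩
            rw [Finset.mem_singleton, wAgent]
            intro hq
            have hq' : (q : ℕ) = 2 * (w j : ℕ) + 1 := by
              have := congrArg (fun z : V13 n m =>
                match z with
                | .inr (.inl (_, q)) => (q : ℕ)
                | _ => 0) hq
              simpa using this
            exact hcond ⟨by omega, by have := hw1 j; omega, by omega⟩
        · simp [fF] at hx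
        · simp [fF, ca] at hx
      _ = 5 := hcard

lemma scoreF_lit (σ : Fin n → Bool) (w : Fin m → Fin 3) (hw1 : ∀ j, (w j : ℕ) < len j)
    (hw2 : ∀ j, (lit j (w j)).2 = σ (lit j (w j)).1)
    (hocc : ∀ v : Fin n,
      (occ13 n m len lit v true = 2 ∧ occ13 n m len lit v false = 1) ∨
      (occ13 n m len lit v true = 1 ∧ occ13 n m len lit v false = 2))
    (v : Fin n) (b : Bool) : score (fF n m len lit σ w) (.inl (v, b)) ≤ 5 := by
  classical
  set L : Finset (V13 n m) :=
    (Finset.univ : Finset (Fin 3)).image fun t => .inr (.inr (.inl ((v, b), t))) with hL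
  have hLcard : L.card = 3 := by
    rw [hL, Finset.card_image_of_injective _ (fun a b h => by simpa using h)]
    simp
  by_cases hb : b = !σ v
  · -- the chosen literal: no witness agent votes for it
    set S : Finset (V13 n m) := ({Sum.inl (v, 0), Sum.inl (v, 1)} : Finset (V13 n m)) ∪ L with hS
    have hcard : S.card ≤ 5 := by
      have h2 : ({Sum.inl (v, 0), Sum.inl (v, 1)} : Finset (V13 n m)).card ≤ 2 := by
        refine (Finset.card_insert_le _ _).trans ?_
        simp
      calc S.card ≤ ({Sum.inl (v, 0), Sum.inl (v, 1)} : Finset (V13 n m)).card + L.card :=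
            Finset.card_union_le _ _
        _ ≤ 2 + 3 := add_le_add h2 hLcard.le
        _ = 5 := rfl
    refine (score_le ?_).trans hcard
    rintro (⟨i, s⟩ | ⟨⟨j, q⟩ | ⟨⟨l, t⟩ | k⟩⟩) hx
    · obtain ⟨rfl, -⟩ : i = v ∧ σ i = !b := by
        have := hx
        simp [fF] at this
        exact this
      have hs : s = 0 ∨ s = 1 := by fin_cases s <;> simp
      rw [hS]
      rcases hs with rfl | rfl <;> simp
    · exfalso
      simp only [fF] at hx
      by_cases hcond : (q : ℕ) % 2 = 1 ∧ (q : ℕ) / 2 < len j ∧ (q : ℕ) / 2 = (w j : ℕ)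
      · rw [if_pos hcond] at hx
        have hqw : (⟨(q : ℕ) / 2, by have := q.isLt; omega⟩ : Fin 3) = w j :=
          Fin.ext (by simpa using hcond.2.2)
        rw [hqw] at hx
        have : lit j (w j) = (v, b) := by simpa using hx
        have h2 := hw2 j
        rw [this] at h2
        simp only at h2
        rw [hb] at h2
        cases σ v <;> simp at h2
      · rw [if_neg hcond] at hx; simp at hx
    · obtain rfl : l = (v, b) := by simpa [fF] using hx
      rw [hS]
      exact Finset.mem_union_right _ (Finset.mem_image.2 ⟨t, Finset.mem_univ _, rfl⟩)
    · simp [fF, ca] at hx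
  · -- a literal of the assignment: at most `occ ≤ 2` witness agents vote for it
    set W : Finset (Fin m) := Finset.univ.filter fun j => lit j (w j) = (v, b) with hW
    have hWocc : W.card ≤ occ13 n m len lit v b := by
      have hWsum : W.card = ∑ j : Fin m, if lit j (w j) = (v, b) then 1 else 0 := by
        rw [hW, Finset.card_filter]
      rw [hWsum, occ13]
      refine Finset.sum_le_sum fun j _ => ?_
      by_cases hj : lit j (w j) = (v, b)
      · rw [if_pos hj]
        refine Finset.card_pos.2 ⟨w j, ?_⟩
        rw [Finset.mem_filter]
        refine ⟨by simp, hw1 j, ?_⟩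
        exact hj
      · rw [if_neg hj]
        exact Nat.zero_le _
    have hWle : W.card ≤ 2 := by
      rcases hocc v with ⟨h1, h2⟩ | ⟨h1, h2⟩ <;> cases b <;> omega
    set S : Finset (V13 n m) := L ∪ W.image (fun j => wAgent n w j) with hS
    have hcard : S.card ≤ 5 := by
      calc S.card ≤ L.card + (W.image (fun j => wAgent n w j)).card :=
            Finset.card_union_le _ _
        _ ≤ 3 + 2 := by
            refine add_le_add hLcard.le ((Finset.card_image_le).trans hWle)
        _ = 5 := rfl
    refine (score_le ?_).trans hcard
    rintro (⟨i, s⟩ | ⟨⟨j, q⟩ | ⟨⟨l, t⟩ | k⟩⟩) hx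
    · exfalso
      obtain ⟨rfl, hsb⟩ : i = v ∧ σ i = !b := by simpa [fF] using hx
      exact hb (by cases b <;> simp_all)
    · simp only [fF] at hx
      by_cases hcond : (q : ℕ) % 2 = 1 ∧ (q : ℕ) / 2 < len j ∧ (q : ℕ) / 2 = (w j : ℕ)
      · rw [if_pos hcond] at hx
        have hqw : (⟨(q : ℕ) / 2, by have := q.isLt; omega⟩ : Fin 3) = w j :=
          Fin.ext (by simpa using hcond.2.2)
        rw [hqw] at hx
        have hlw : lit j (w j) = (v, b) := by simpa using hx
        have hqval : q = (⟨2 * (w j : ℕ) + 1, by have := (w j).isLt; omega⟩ : Fin 6) := by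
          refine Fin.ext ?_
          have := q.isLt
          simp only
          omega
        rw [hS]
        refine Finset.mem_union_right _ (Finset.mem_image.2 ⟨j, ?_, ?_⟩)
        · exact Finset.mem_filter.2 ⟨Finset.mem_univ _, hlw⟩
        · rw [wAgent, hqval]
      · rw [if_neg hcond] at hx; simp at hx
    · obtain rfl : l = (v, b) := by simpa [fF] using hx
      rw [hS]
      exact Finset.mem_union_left _ (Finset.mem_image.2 ⟨t, Finset.mem_univ _, rfl⟩)
    · simp [fF, ca] at hx

lemma scoreF_cd (σ : Fin n → Bool) (w : Fin m → Fin 3) :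
    score (fF n m len lit σ w) (cd n m) ≤ 5 := by
  refine le_trans (score_le (S := (∅ : Finset (V13 n m))) ?_) (by simp)
  rintro (⟨i, s⟩ | ⟨⟨j, q⟩ | ⟨⟨l, t⟩ | k⟩⟩) hx
  · simp [fF, cd] at hx
  · simp only [fF] at hx; split_ifs at hx <;> simp [cd] at hx
  · simp [fF, cd] at hx
  · simp [fF, cd, ca] at hx

end forwardscore
/-- The `(3≤,3≤)`-SAT instance is satisfiable iff the distinguished candidate `a` is a
possible co-winner of the constructed social poll instance, whose social network graph
is a disjoint union of paths of length at most 1 and where every agent has two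
preferred candidates. Hence the unweighted possible winner problem is NP-hard even on
disjoint unions of edges and isolated vertices. -/
theorem sat_iff_possible_winner
    (n m : ℕ) (len : Fin m → ℕ) (lit : Fin m → Fin 3 → Fin n × Bool)
    (hlen : ∀ j, len j = 2 ∨ len j = 3)
    (hocc : ∀ v : Fin n,
      (occ13 n m len lit v true = 2 ∧ occ13 n m len lit v false = 1) ∨
      (occ13 n m len lit v true = 1 ∧ occ13 n m len lit v false = 2)) :
    Satisfiable13 n m len lit ↔
    (∃ (ord : V13 n m → ℕ) (f : V13 n m → C13 n m),
      Function.Injective ord ∧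
      Consistent (adj13 n m len) (P13 n m len lit) (p113 n m len lit) ord f ∧
      ∀ c : C13 n m, score f c ≤ score f (ca n m)) := by
  constructor
  · rintro ⟨σ, hσ⟩
    choose w hw1 hw2 using hσ
    refine ⟨ordF n m σ w, fF n m len lit σ w, ordF_inj n m σ w, consF σ w hw1, ?_⟩
    intro c
    rw [scoreF_ca σ w]
    rcases c with ⟨v, b⟩ | ⟨j0 | r⟩
    · exact scoreF_lit σ w hw1 hw2 hocc v b
    · exact scoreF_clause σ w hw1 j0
    · have hr : r = 0 ∨ r = 1 := by fin_cases r <;> simp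
      rcases hr with rfl | rfl
      · exact scoreF_cd σ w
      · exact le_of_eq (scoreF_ca σ w)
  · rintro ⟨ord, f, hinj, hC, hsc⟩
    have hfmem : ∀ x, f x ∈ P13 n m len lit x := f_mem_P hC (p1_mem_P13 lit)
    -- the distinguished candidate's score is at most 5
    have hca5 : score f (ca n m) ≤ 5 := by
      refine le_trans (score_le (S := aAgents n m) ?_) (le_of_eq aAgents_card)
      rintro (⟨i, s⟩ | ⟨⟨j, q⟩ | ⟨⟨l, t⟩ | k⟩⟩) hx
      · have := hfmem (.inl (i, s)); rw [hx] at this; simp [P13, ca] at this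
      · have := hfmem (.inr (.inl (j, q))); rw [hx] at this
        simp only [P13] at this
        split_ifs at this <;> simp [ca, cd] at this
      · have := hfmem (.inr (.inr (.inl (l, t)))); rw [hx] at this
        simp [P13, ca, cd] at this
      · rw [aAgents]; exact Finset.mem_image.2 ⟨k, Finset.mem_univ _, rfl⟩
    -- isolated literal agents vote their literal
    have hlitvote : ∀ (l : Fin n × Bool) (t : Fin 3),
        f (.inr (.inr (.inl (l, t)))) = .inl l := by
      intro l t
      rcases vote_cases hC (.inr (.inr (.inl (l, t)))) with hp | ⟨y, hadj, -, -, -⟩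
      · simpa [p113] using hp
      · rcases y with y | ⟨y | y⟩ <;> exact hadj.elim
    -- both variable agents vote the same literal
    have hvar : ∀ v : Fin n, ∃ c : Bool,
        f (.inl (v, 0)) = .inl (v, c) ∧ f (.inl (v, 1)) = .inl (v, c) := by
      intro v
      have h0 := hfmem (.inl (v, 0))
      have h1 := hfmem (.inl (v, 1))
      simp only [P13, Finset.mem_insert, Finset.mem_singleton] at h0 h1
      have heq : f (.inl (v, 0)) = f (.inl (v, 1)) := by
        have hne : ord (.inl (v, 0)) ≠ ord (.inl (v, 1)) := by
          intro h
          have := hinj h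
          simp at this
        rcases lt_or_gt_of_ne hne with hlt | hlt
        · have hp : prior (adj13 n m len) ord (.inl (v, 1)) = {(.inl (v, 0) : V13 n m)} := by
            rw [prior_var ord v 1 0 (by decide), if_pos hlt]
          exact (pair_copy hC hp (by
            rcases h0 with h | h <;> rw [h] <;>
              simp [P13, Finset.mem_insert, Finset.mem_singleton])).symm
        · have hp : prior (adj13 n m len) ord (.inl (v, 0)) = {(.inl (v, 1) : V13 n m)} := by
            rw [prior_var ord v 0 1 (by decide), if_pos hlt]
          exact pair_copy hC hp (by
            rcases h1 with h | h <;> rw [h] <;>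
              simp [P13, Finset.mem_insert, Finset.mem_singleton])
      rcases h0 with h | h
      · exact ⟨true, h, heq.symm.trans h⟩
      · exact ⟨false, h, heq.symm.trans h⟩
    choose cv hcv0 hcv1 using hvar
    refine ⟨fun v => !(cv v), ?_⟩
    intro j
    -- some literal agent of clause j votes its literal
    obtain ⟨q, hq1, hq2, hqf⟩ : ∃ q : Fin 6, (q : ℕ) % 2 = 1 ∧ (q : ℕ) / 2 < len j ∧
        f (.inr (.inl (j, q))) = .inl (lit j ⟨(q : ℕ) / 2, by have := q.isLt; omega⟩) := by
      by_contra hno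
      push_neg at hno
      have hall : ∀ q : Fin 6, f (.inr (.inl (j, q))) = .inr (.inl j) := by
        intro q
        have hm := hfmem (.inr (.inl (j, q)))
        by_cases hcnd : (q : ℕ) / 2 < len j ∧ (q : ℕ) % 2 = 1
        · simp only [P13] at hm
          rw [if_pos hcnd] at hm
          simp only [Finset.mem_insert, Finset.mem_singleton] at hm
          rcases hm with hm | hm
          · exact absurd hm (hno q hcnd.2 hcnd.1)
          · exact hm
        · simp only [P13] at hm
          rw [if_neg hcnd] at hm
          simp only [Finset.mem_insert, Finset.mem_singleton] at hm
          rcases hm with hm | hm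
          · exact hm
          · exfalso
            rcases vote_cases hC (.inr (.inl (j, q))) with hp | ⟨y, hadj, -, hfy, -⟩
            · rw [hp] at hm
              simp only [p113] at hm
              rw [if_neg hcnd] at hm
              simp [cd] at hm
            · rcases y with y | ⟨⟨j2, q2⟩ | ⟨y | y⟩⟩
              · exact hadj.elim
              · obtain ⟨rfl, he2, hne2, hl2⟩ :
                    j = j2 ∧ (q : ℕ) / 2 = (q2 : ℕ) / 2 ∧ q ≠ q2 ∧ (q : ℕ) / 2 < len j := hadj
                have hq2cnd : (q2 : ℕ) / 2 < len j ∧ (q2 : ℕ) % 2 = 1 := by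
                  constructor
                  · omega
                  · have : (q : ℕ) ≠ (q2 : ℕ) := fun hh => hne2 (Fin.ext hh)
                    have : ¬ (q : ℕ) % 2 = 1 := fun hh => hcnd ⟨hl2, hh⟩
                    omega
                have hm2 := hfmem (.inr (.inl (j, q2)))
                simp only [P13] at hm2
                rw [if_pos hq2cnd] at hm2
                simp only [Finset.mem_insert, Finset.mem_singleton] at hm2
                rw [hfy, hm] at hm2
                simp [cd] at hm2
              · exact hadj.elim
              · exact hadj.elim
      -- then clause j would get 6 votes
      have h6 : (6 : ℕ) ≤ score f (.inr (.inl j)) := by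
        have hsub := score_ge (f := f) (c := (.inr (.inl j) : C13 n m))
          (S := (Finset.univ : Finset (Fin 6)).image fun q => .inr (.inl (j, q)))
          (by
            intro x hx
            obtain ⟨q, -, rfl⟩ := Finset.mem_image.1 hx
            exact hall q)
        rwa [Finset.card_image_of_injective _ (fun a b h => by simpa using h),
          Finset.card_univ, Fintype.card_fin] at hsub
      have := hsc (.inr (.inl j))
      omega
    obtain ⟨p, hpval⟩ : ∃ p : Fin 3, (p : ℕ) = (q : ℕ) / 2 :=
      ⟨⟨(q : ℕ) / 2, by have := q.isLt; omega⟩, rfl⟩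
    have hpq : (⟨(q : ℕ) / 2, by have := q.isLt; omega⟩ : Fin 3) = p := Fin.ext hpval.symm
    rw [hpq] at hqf
    refine ⟨p, by rw [hpval]; exact hq2, ?_⟩
    rcases hvb : lit j p with ⟨v, b⟩
    rw [hvb] at hqf
    show b = !(cv v)
    have hne : cv v ≠ b := by
      intro hcb
      have hS6 : ∀ x ∈ ({Sum.inl (v, 0), Sum.inl (v, 1),
          Sum.inr (Sum.inr (Sum.inl ((v, b), 0))), Sum.inr (Sum.inr (Sum.inl ((v, b), 1))),
          Sum.inr (Sum.inr (Sum.inl ((v, b), 2))), Sum.inr (Sum.inl (j, q))} :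
            Finset (V13 n m)), f x = Sum.inl (v, b) := by
        intro x hx
        simp only [Finset.mem_insert, Finset.mem_singleton] at hx
        rcases hx with rfl | rfl | rfl | rfl | rfl | rfl
        · rw [hcv0 v, hcb]
        · rw [hcv1 v, hcb]
        · exact hlitvote (v, b) 0
        · exact hlitvote (v, b) 1
        · exact hlitvote (v, b) 2
        · exact hqf
      have hcard6 : ({Sum.inl (v, 0), Sum.inl (v, 1),
          Sum.inr (Sum.inr (Sum.inl ((v, b), 0))), Sum.inr (Sum.inr (Sum.inl ((v, b), 1))),
          Sum.inr (Sum.inr (Sum.inl ((v, b), 2))), Sum.inr (Sum.inl (j, q))} :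
            Finset (V13 n m)).card = 6 := by
        rw [Finset.card_insert_of_notMem (by simp [Fin.ext_iff]),
          Finset.card_insert_of_notMem (by simp [Fin.ext_iff]),
          Finset.card_insert_of_notMem (by simp [Fin.ext_iff]),
          Finset.card_insert_of_notMem (by simp [Fin.ext_iff]),
          Finset.card_insert_of_notMem (by simp [Fin.ext_iff]),
          Finset.card_singleton]
      have h6 := score_ge hS6
      rw [hcard6] at h6
      have := hsc (.inl (v, b))
      omega
    cases hcvv : cv v <;> cases b <;> simp_all
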